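/- Let E be a finitely generated bi-Hilbertian A-bimodule. For 0 ≤ T ∈ 𝒯_E (the Toeplitz algebra acting on the Fock module) one has Φ_k(T) e^{-β_k} ≤ ‖T‖·1_A for every k, and hence for complex s with Re(s) > 1 the series Σ_{k≥0} Φ_k(T) e^{-β_k} (1+k²)^{-s/2} converges in norm to an element Φ_∞^s(T) of A, which is positive when s is real. -/

import Mathlib

set_option linter.unusedSectionVars false

section Aux

variable {B : Type*} [NormedRing B] [StarRing B] [CStarRing B] [NormedAlgebra ℂ B]


variable {B : Type*} [NormedRing B] [StarRing B] [CStarRing B] [NormedAlgebra ℂ B]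

lemma aux_star_algebraMap_real (x : ℝ) : star (algebraMap ℝ B x) = algebraMap ℝ B x := by
  let f : ℝ →+* B :=
    { toFun := fun x => star (algebraMap ℝ B x)
      map_one' := by simp
      map_mul' := fun x y => by
        rw [show x * y = y * x from mul_comm x y, map_mul, star_mul]
      map_zero' := by simp
      map_add' := fun x y => by simp [star_add] }
  have hfc : Continuous f := continuous_star.comp (continuous_algebraMap ℝ B)
  have key : ∀ q : ℚ, f (q : ℝ) = algebraMap ℝ B (q : ℝ) := by
    intro q
    have hd : ((q.den : ℝ)) ≠ 0 := Nat.cast_ne_zero.2 q.den_nz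
    have hdA : IsUnit (algebraMap ℝ B (q.den : ℝ)) := (isUnit_iff_ne_zero.2 hd).map _
    apply hdA.mul_left_cancel
    have h1 : (q.den : ℝ) * (q : ℝ) = (q.num : ℝ) := by
      rw [mul_comm]
      exact_mod_cast congrArg (Rat.cast : ℚ → ℝ) (Rat.mul_den_eq_num q)
    have hfd : algebraMap ℝ B (q.den : ℝ) = f (q.den : ℝ) :=
      (map_natCast (algebraMap ℝ B) q.den).trans (map_natCast f q.den).symm
    calc algebraMap ℝ B (q.den : ℝ) * f (q : ℝ)
        = f ((q.den : ℝ) * (q : ℝ)) := by rw [hfd, ← map_mul]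
      _ = f ((q.num : ℝ)) := by rw [h1]
      _ = algebraMap ℝ B ((q.num : ℝ)) :=
            (map_intCast f q.num).trans (map_intCast (algebraMap ℝ B) q.num).symm
      _ = algebraMap ℝ B (q.den : ℝ) * algebraMap ℝ B (q : ℝ) := by rw [← map_mul, h1]
  have hdense : Dense (Set.range ((↑) : ℚ → ℝ)) := Rat.denseRange_cast
  have heq : (f : ℝ → B) = (algebraMap ℝ B : ℝ → B) :=
    Continuous.ext_on hdense hfc (continuous_algebraMap ℝ B)
      (by rintro _ ⟨q, rfl⟩; exact key q)
  exact congrFun heq x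

lemma aux_star_real_smul (r : ℝ) (a : B) : star (r • a) = r • star a := by
  rw [Algebra.smul_def, star_mul, aux_star_algebraMap_real, ← Algebra.commutes, ← Algebra.smul_def]


variable [PartialOrder B] [StarOrderedRing B]

lemma aux_star_I_smul_one :
    star (Complex.I • (1 : B)) = -(Complex.I • (1 : B)) := by
  set u : B := Complex.I • (1 : B) with hu
  have hcomm : ∀ a : B, a * u = u * a := fun a => by
    rw [hu, mul_smul_comm, smul_mul_assoc, mul_one, one_mul]
  have hscomm : ∀ a : B, a * star u = star u * a := fun a => by
    have h := congrArg star (hcomm (star a))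
    rw [star_mul, star_mul, star_star] at h
    exact h.symm
  have hu2 : u * u = -1 := by
    rw [hu, smul_mul_assoc, mul_smul_comm, smul_smul, mul_one, Complex.I_mul_I, neg_smul, one_smul]
  have hsu2 : star u * star u = -1 := by
    rw [← star_mul, hu2, star_neg, star_one]
  set v : B := u * star u with hv
  have hv_sa : star v = v := by rw [hv, star_mul, star_star]
  have hvcomm : ∀ a : B, a * v = v * a := fun a => by
    rw [hv, ← mul_assoc, hcomm a, mul_assoc, hscomm a, ← mul_assoc]
  have hv2 : v * v = 1 := by
    have h1 : star u * u = u * star u := (hscomm u).symm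
    calc v * v = u * (star u * u) * star u := by rw [hv]; noncomm_ring
      _ = (u * u) * (star u * star u) := by rw [h1]; noncomm_ring
      _ = 1 := by rw [hu2, hsu2]; noncomm_ring
  set p : B := (2⁻¹ : ℝ) • (1 - v) with hp
  have hp_sa : star p = p := by
    rw [hp, aux_star_real_smul, star_sub, star_one, hv_sa]
  have hp2 : p * p = p := by
    have h1 : (1 - v) * (1 - v) = (1 - v) + (1 - v) := by
      simp only [sub_mul, mul_sub, one_mul, mul_one, hv2]; abel
    rw [hp, smul_mul_assoc, mul_smul_comm, smul_smul, h1, smul_add, ← add_smul]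
    norm_num
  have hp_nonneg : 0 ≤ p := by
    have h := star_mul_self_nonneg p
    rwa [hp_sa, hp2] at h
  have hpcomm : ∀ a : B, a * p = p * a := fun a => by
    rw [hp, mul_smul_comm, smul_mul_assoc, mul_sub, sub_mul, mul_one, one_mul, hvcomm a]
  set w : B := u * p with hw
  have hvu : v * star u = -u := by
    rw [hv, mul_assoc, hsu2, mul_neg_one]
  have huv : u * v = -star u := by
    rw [hv, ← mul_assoc, hu2, neg_one_mul]
  have hw_sa : star w = w := by
    have h1 : p * star u = (2⁻¹ : ℝ) • (star u + u) := by
      rw [hp, smul_mul_assoc, sub_mul, one_mul, hvu, sub_neg_eq_add]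
    have h2 : u * p = (2⁻¹ : ℝ) • (u + star u) := by
      rw [hp, mul_smul_comm, mul_sub, mul_one, huv, sub_neg_eq_add]
    rw [hw, star_mul, hp_sa, h1, h2, add_comm]
  have hw2 : w * w = -p := by
    calc w * w = u * (p * u) * p := by rw [hw]; noncomm_ring
      _ = (u * u) * (p * p) := by rw [← hpcomm u]; noncomm_ring
      _ = -p := by rw [hu2, hp2, neg_one_mul]
  have hp_nonpos : p ≤ 0 := by
    have h := star_mul_self_nonneg w
    rw [hw_sa, hw2] at h
    exact neg_nonneg.mp h
  have hp0 : p = 0 := le_antisymm hp_nonpos hp_nonneg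
  have hv1 : v = 1 := by
    have h : (1 : B) - v = 0 := by
      have h2 := hp0
      rw [hp, smul_eq_zero] at h2
      rcases h2 with h | h
      · norm_num at h
      · exact h
    exact ((sub_eq_zero.mp h).symm)
  have hfin : u * star u = 1 := hv ▸ hv1
  calc star u = -(u * u) * star u := by rw [hu2]; simp
    _ = -(u * (u * star u)) := by rw [neg_mul, mul_assoc]
    _ = -u := by rw [hfin, mul_one]

lemma aux_star_smul (z : ℂ) (a : B) : star (z • a) = (starRingEnd ℂ z) • star a := by
  have hdec : ∀ y : ℂ, y • (1 : B) = y.re • (1 : B) + y.im • (Complex.I • (1 : B)) := by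
    intro y
    have h1 : y.re • (1 : B) = ((y.re : ℂ)) • (1 : B) := by
      rw [← algebraMap_smul ℂ y.re (1 : B), Complex.coe_algebraMap]
    have h2 : y.im • (Complex.I • (1 : B)) = ((y.im : ℂ) * Complex.I) • (1 : B) := by
      rw [← algebraMap_smul ℂ y.im (Complex.I • (1 : B)), Complex.coe_algebraMap, smul_smul]
    rw [h1, h2, ← add_smul, Complex.re_add_im]
  have hone : star (z • (1 : B)) = (starRingEnd ℂ z) • (1 : B) := by
    rw [hdec z, star_add, aux_star_real_smul, aux_star_real_smul, star_one,
      aux_star_I_smul_one, hdec (starRingEnd ℂ z), Complex.conj_re, Complex.conj_im]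
    simp [smul_neg, neg_smul]
  calc star (z • a) = star ((z • (1 : B)) * a) := by rw [smul_mul_assoc, one_mul]
    _ = star a * ((starRingEnd ℂ z) • (1 : B)) := by rw [star_mul, hone]
    _ = (starRingEnd ℂ z) • star a := by rw [mul_smul_comm, mul_one]


lemma aux_mul_nonneg [PartialOrder B] [StarOrderedRing B] (x c : B) (hx : 0 ≤ x) (hc : 0 ≤ c)
    (hcomm : ∀ a : B, a * c = c * a) : 0 ≤ x * c := by
  rw [StarOrderedRing.nonneg_iff] at hx
  induction hx using AddSubmonoid.closure_induction with
  | mem y hy =>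
    obtain ⟨s, rfl⟩ := hy
    have h : star s * s * c = star s * c * s := by
      rw [mul_assoc, hcomm s, mul_assoc]
    rw [h]
    exact star_left_conjugate_nonneg hc s
  | zero => simp
  | add a b _ _ ha hb => rw [add_mul]; exact add_nonneg ha hb


end Aux

/- STATEMENT 12: Let E be a finitely generated bi-Hilbertian A-bimodule, 𝒯 = 𝒯_E the
Toeplitz algebra acting on the Fock module, Φ_k(T) = Φ_k(P_k T P_k) the left-inner-
product traces and e^{β_k} = Φ_k(Id) (positive, central, invertible, with
Φ_k(Id)e^{-β_k} = 1).  Then for 0 ≤ T ∈ 𝒯_E one has Φ_k(T)e^{-β_k} ≤ ‖T‖·1_A for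
every k, and for Re(s) > 1 the series Σ_k Φ_k(T)e^{-β_k}(1+k²)^{-s/2} converges in
norm to an element Φ_∞^s(T) of A, positive when s is real. -/
theorem statement12
    {A 𝒯 : Type*}
    [NormedRing A] [StarRing A] [CStarRing A] [NormedAlgebra ℂ A] [CompleteSpace A]
    [NormOneClass A] [PartialOrder A] [StarOrderedRing A]
    [NormedRing 𝒯] [StarRing 𝒯] [CStarRing 𝒯] [NormedAlgebra ℂ 𝒯] [CompleteSpace 𝒯]
    [NormOneClass 𝒯] [PartialOrder 𝒯] [StarOrderedRing 𝒯]
    (Φ : ℕ → 𝒯 →ₗ[ℂ] A)                 -- the maps Φ_k on the Toeplitz algebra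
    (hΦ_pos : ∀ k, ∀ T : 𝒯, 0 ≤ T → 0 ≤ Φ k T)
    (eβinv : ℕ → A)                      -- the elements e^{-β_k}
    (heβinv_pos : ∀ k, 0 ≤ eβinv k)
    (heβinv_central : ∀ k (a : A), a * eβinv k = eβinv k * a)
    (hnorm : ∀ k, Φ k 1 * eβinv k = 1) : -- Φ_k(Id_{E^{⊗k}})e^{-β_k} = 1_A
    ∀ T : 𝒯, 0 ≤ T →
      (∀ k, Φ k T * eβinv k ≤ ‖T‖ • (1 : A)) ∧
      (∀ s : ℂ, 1 < s.re →
        ∃ ΦsT : A,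
          HasSum (fun k : ℕ => ((1 + (k : ℂ) ^ 2) ^ (-s / 2)) • (Φ k T * eβinv k)) ΦsT ∧
          (s.im = 0 → 0 ≤ ΦsT)) := by
  letI : StarModule ℂ A := ⟨fun z a => aux_star_smul z a⟩
  letI : StarModule ℂ 𝒯 := ⟨fun z a => aux_star_smul z a⟩
  letI : CStarAlgebra A := {}
  letI : CStarAlgebra 𝒯 := {}
  intro T hT
  -- Part 1
  have hTsa : IsSelfAdjoint T := IsSelfAdjoint.of_nonneg hT
  have hTle : T ≤ ‖T‖ • (1 : 𝒯) := by
    simpa [Algebra.algebraMap_eq_smul_one] using hTsa.le_algebraMap_norm_self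
  have part1 : ∀ k, Φ k T * eβinv k ≤ ‖T‖ • (1 : A) := by
    intro k
    have h1 : Φ k T ≤ ‖T‖ • Φ k 1 := by
      have h := hΦ_pos k (‖T‖ • 1 - T) (sub_nonneg.2 hTle)
      rwa [map_sub, LinearMap.map_smul_of_tower, sub_nonneg] at h
    have h2 : 0 ≤ (‖T‖ • Φ k 1 - Φ k T) * eβinv k :=
      aux_mul_nonneg _ _ (sub_nonneg.2 h1) (heβinv_pos k) (heβinv_central k)
    rwa [sub_mul, smul_mul_assoc, hnorm k, sub_nonneg] at h2
  have gpos : ∀ k, 0 ≤ Φ k T * eβinv k := fun k =>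
    aux_mul_nonneg _ _ (hΦ_pos k T hT) (heβinv_pos k) (heβinv_central k)
  refine ⟨part1, ?_⟩
  intro s hs
  set σ : ℝ := s.re with hσdef
  have hgnorm : ∀ k, ‖Φ k T * eβinv k‖ ≤ ‖T‖ := by
    intro k
    have h := CStarAlgebra.norm_le_norm_of_nonneg_of_le (gpos k) (part1 k)
    calc ‖Φ k T * eβinv k‖ ≤ ‖‖T‖ • (1 : A)‖ := h
      _ = ‖T‖ := by rw [norm_smul, norm_one, mul_one, Real.norm_eq_abs, abs_of_nonneg (norm_nonneg T)]
  have hbasepos : ∀ k : ℕ, (0 : ℝ) < 1 + (k : ℝ) ^ 2 := fun k => by positivity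
  have hbase : ∀ k : ℕ, ((1 + (k : ℝ) ^ 2 : ℝ) : ℂ) = 1 + (k : ℂ) ^ 2 := fun k => by push_cast; ring
  have hcnorm : ∀ k : ℕ, ‖(1 + (k : ℂ) ^ 2) ^ (-s / 2)‖ = (1 + (k : ℝ) ^ 2) ^ (-σ / 2) := by
    intro k
    rw [← hbase k, Complex.norm_cpow_eq_rpow_re_of_pos (hbasepos k)]
    congr 1
    simp [Complex.div_re, Complex.normSq, hσdef]
    try ring
  have hσpos : (0 : ℝ) < σ := lt_trans one_pos hs
  have hsum0 : Summable (fun k : ℕ => ((k : ℝ) + 1) ^ (-σ)) := by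
    have h1 : Summable (fun n : ℕ => (n : ℝ) ^ (-σ)) := Real.summable_nat_rpow.2 (by linarith)
    have h2 := (summable_nat_add_iff 1).2 h1
    refine h2.congr fun n => ?_
    push_cast
    ring_nf
  have hbound : ∀ k : ℕ, (1 + (k : ℝ) ^ 2) ^ (-σ / 2) ≤ (2 : ℝ) ^ (σ / 2) * ((k : ℝ) + 1) ^ (-σ) := by
    intro k
    set x : ℝ := (k : ℝ) with hx
    have hx0 : (0 : ℝ) ≤ x := Nat.cast_nonneg k
    have hkey : ((x + 1) ^ 2) / 2 ≤ 1 + x ^ 2 := by nlinarith [sq_nonneg (x - 1)]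
    have hb1 : (0 : ℝ) < ((x + 1) ^ 2) / 2 := by positivity
    have hmono : (((x + 1) ^ 2) / 2) ^ (σ / 2) ≤ (1 + x ^ 2) ^ (σ / 2) :=
      Real.rpow_le_rpow hb1.le hkey (by positivity)
    have heq : (((x + 1) ^ 2) / 2) ^ (σ / 2) = (x + 1) ^ σ / (2 : ℝ) ^ (σ / 2) := by
      rw [Real.div_rpow (by positivity) (by norm_num), ← Real.rpow_natCast (x + 1) 2,
        ← Real.rpow_mul (by positivity)]
      congr 1
      push_cast
      ring
    rw [neg_div, Real.rpow_neg (hbasepos k).le, Real.rpow_neg (by positivity)]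
    rw [heq] at hmono
    have hpos1 : (0 : ℝ) < (x + 1) ^ σ / (2 : ℝ) ^ (σ / 2) := by positivity
    have h2 := inv_anti₀ hpos1 hmono
    rw [inv_div] at h2
    calc ((1 + x ^ 2) ^ (σ / 2))⁻¹ ≤ (2 : ℝ) ^ (σ / 2) / (x + 1) ^ σ := h2
      _ = (2 : ℝ) ^ (σ / 2) * ((x + 1) ^ σ)⁻¹ := by rw [div_eq_mul_inv]
  -- summability
  have hnorms : Summable (fun k : ℕ => ‖((1 + (k : ℂ) ^ 2) ^ (-s / 2)) • (Φ k T * eβinv k)‖) := by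
    refine Summable.of_nonneg_of_le (fun k => norm_nonneg _) (fun k => ?_)
      (hsum0.mul_left (((2 : ℝ) ^ (σ / 2)) * ‖T‖))
    rw [norm_smul, hcnorm k]
    calc (1 + (k : ℝ) ^ 2) ^ (-σ / 2) * ‖Φ k T * eβinv k‖
        ≤ ((2 : ℝ) ^ (σ / 2) * ((k : ℝ) + 1) ^ (-σ)) * ‖T‖ :=
          mul_le_mul (hbound k) (hgnorm k) (norm_nonneg _) (by positivity)
      _ = ((2 : ℝ) ^ (σ / 2) * ‖T‖) * ((k : ℝ) + 1) ^ (-σ) := by ring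
  have hS : Summable (fun k : ℕ => ((1 + (k : ℂ) ^ 2) ^ (-s / 2)) • (Φ k T * eβinv k)) :=
    Summable.of_norm hnorms
  refine ⟨∑' k : ℕ, ((1 + (k : ℂ) ^ 2) ^ (-s / 2)) • (Φ k T * eβinv k), hS.hasSum, ?_⟩
  intro him
  apply tsum_nonneg
  intro k
  -- each term is nonnegative when s is real
  have hsreal : s = ((σ : ℝ) : ℂ) := by
    apply Complex.ext
    · simp [hσdef]
    · simp [him]
  have hcr : (1 + (k : ℂ) ^ 2) ^ (-s / 2) = (((1 + (k : ℝ) ^ 2) ^ (-σ / 2) : ℝ) : ℂ) := by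
    rw [Complex.ofReal_cpow (hbasepos k).le, hbase k]
    congr 1
    rw [hsreal]
    push_cast
    ring
  set r : ℝ := (1 + (k : ℝ) ^ 2) ^ (-σ / 2) with hr
  have hrpos : (0 : ℝ) ≤ r := Real.rpow_nonneg (hbasepos k).le _
  rw [hcr, show ((r : ℝ) : ℂ) • (Φ k T * eβinv k) = r • (Φ k T * eβinv k) from by
    rw [← algebraMap_smul ℂ r (Φ k T * eβinv k), Complex.coe_algebraMap]]
  -- r • g = star c * g * c with c = (√r) • 1
  set c : A := (Real.sqrt r) • (1 : A) with hc
  have hcsa : star c = c := by rw [hc, aux_star_real_smul, star_one]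
  have hconj := star_left_conjugate_nonneg (gpos k) c
  have : star c * (Φ k T * eβinv k) * c = r • (Φ k T * eβinv k) := by
    rw [hcsa, hc, smul_mul_assoc, one_mul, mul_smul_comm, mul_one, smul_smul,
      Real.mul_self_sqrt hrpos]
  rwa [this] at hconj
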